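/- Let Ω ⊂ ℝⁿ be bounded, θ : Ω → ℝ Lipschitz with coarea disintegration, and suppose the critical value set V_θ is finite, w_θ ∈ L^∞_loc(ℝ ∖ V_θ), and w_θ(t) ≤ C_β dist(t, V_θ)^{−β} for a.e. t with dist(t,V_θ) < δ₀, where β ∈ [0,1). Fix δ ∈ (0, δ₀), set U_δ := {t : dist(t, V_θ) < δ}, and let 1 < r < 1 + 1/β. Then for every f ∈ L^r(Ω): (i) ‖w_θ M̃_θ f‖_{L^r(U_δ)}^r ≤ C_β^{r−1} ∫_{θ⁻¹(U_δ)} |f(x)|^r dist(θ(x), V_θ)^{−β(r−1)} dx, and (ii) there exists C_δ < ∞ with ‖w_θ M̃_θ f‖_{L^r(ℝ ∖ U_δ)} ≤ C_δ ‖f‖_{L^r(Ω)}. -/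

import Mathlib

open MeasureTheory Set ENNReal Metric

/-- The coarea fiber integral `∫_{Ω ∩ θ⁻¹(t)} G / |∇θ| dH^{n−1}`. -/
noncomputable def fibInt {n : ℕ} (Ω : Set (Fin n → ℝ)) (θ : (Fin n → ℝ) → ℝ)
    (G : (Fin n → ℝ) → ℝ≥0∞) (t : ℝ) : ℝ≥0∞ :=
  ∫⁻ x in Ω ∩ θ ⁻¹' {t},
    G x * (ENNReal.ofReal ‖fderiv ℝ θ x‖)⁻¹ ∂(μH[(n : ℝ) - 1])

/-- The pushforward density `w_θ(t) = ∫_{θ⁻¹(t)} |∇θ|^{−1} dH^{n−1}`. -/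
noncomputable def wθ {n : ℕ} (Ω : Set (Fin n → ℝ)) (θ : (Fin n → ℝ) → ℝ)
    (t : ℝ) : ℝ≥0∞ :=
  fibInt Ω θ (fun _ => 1) t

/-- The normalized fiber average `M̃_θ f(t)`, set to `0` when `w_θ(t) ∈ {0, ∞}`. -/
noncomputable def fibAvg {n : ℕ} (Ω : Set (Fin n → ℝ)) (θ : (Fin n → ℝ) → ℝ)
    (f : (Fin n → ℝ) → ℝ) (t : ℝ) : ℝ :=
  if 0 < wθ Ω θ t ∧ wθ Ω θ t < ⊤ then
    (wθ Ω θ t).toReal⁻¹ *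
      ∫ x in Ω ∩ θ ⁻¹' {t}, f x * ‖fderiv ℝ θ x‖⁻¹ ∂(μH[(n : ℝ) - 1])
  else 0

/-- Abstract Hölder/Jensen bound: `|∫ f g|^r ≤ (∫ g)^{r-1} ∫ |f|^r g`. -/
lemma holder_key {α : Type*} [MeasurableSpace α] (μ : Measure α)
    (f : α → ℝ) (g : α → ℝ≥0∞)
    (hf : AEMeasurable f μ) (hg : AEMeasurable g μ) (r : ℝ) (hr : 1 < r) :
    ENNReal.ofReal (|∫ x, f x * (g x).toReal ∂μ| ^ r)
      ≤ (∫⁻ x, g x ∂μ) ^ (r - 1) * ∫⁻ x, (‖f x‖₊ : ℝ≥0∞) ^ r * g x ∂μ := by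
  have hr0 : (0:ℝ) < r := lt_trans one_pos hr
  set I : ℝ := ∫ x, f x * (g x).toReal ∂μ with hI
  have h1 : ENNReal.ofReal (|I| ^ r) = ((‖I‖₊ : ℝ≥0∞)) ^ r := by
    rw [← enorm_eq_nnnorm, Real.enorm_eq_ofReal_abs, ENNReal.ofReal_rpow_of_nonneg (abs_nonneg _) hr0.le]
  have h2 : (‖I‖₊ : ℝ≥0∞) ≤ ∫⁻ x, (‖f x‖₊ : ℝ≥0∞) * g x ∂μ := by
    refine le_trans (enorm_integral_le_lintegral_enorm _) (lintegral_mono fun x => ?_)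
    rw [enorm_eq_nnnorm, nnnorm_mul]
    push_cast
    refine mul_le_mul_right ?_ _
    rw [← enorm_eq_nnnorm, Real.enorm_eq_ofReal_abs, abs_of_nonneg ENNReal.toReal_nonneg]
    exact ENNReal.ofReal_toReal_le
  have hq := Real.HolderConjugate.conjExponent hr
  set q := r.conjExponent with hqdef
  have hq0 : 0 < q := hq.symm.pos
  have hiq : 1/q = 1 - 1/r := by
    have := hq.inv_add_inv_eq_one
    rw [one_div, one_div]; linarith
  have hsplit : ∀ x, (‖f x‖₊ : ℝ≥0∞) * g x
      = ((‖f x‖₊ : ℝ≥0∞) * (g x) ^ (1/r)) * (g x) ^ (1/q) := by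
    intro x
    rw [mul_assoc, ← ENNReal.rpow_add_of_nonneg _ _ (by positivity) (by positivity)]
    have : 1/r + 1/q = 1 := by rw [hiq]; ring
    rw [this, ENNReal.rpow_one]
  have h3 : ∫⁻ x, (‖f x‖₊ : ℝ≥0∞) * g x ∂μ
      ≤ (∫⁻ x, (‖f x‖₊ : ℝ≥0∞) ^ r * g x ∂μ) ^ (1/r) * (∫⁻ x, g x ∂μ) ^ (1/q) := by
    have hmf : AEMeasurable (fun x => (‖f x‖₊ : ℝ≥0∞) * (g x) ^ (1/r)) μ :=
      hf.enorm.mul (hg.pow_const _)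
    have hmg : AEMeasurable (fun x => (g x) ^ (1/q)) μ := hg.pow_const _
    have := ENNReal.lintegral_mul_le_Lp_mul_Lq μ hq hmf hmg
    simp only [Pi.mul_apply] at this
    calc ∫⁻ x, (‖f x‖₊ : ℝ≥0∞) * g x ∂μ
        = ∫⁻ x, ((‖f x‖₊ : ℝ≥0∞) * (g x) ^ (1/r)) * (g x) ^ (1/q) ∂μ := by
          exact lintegral_congr hsplit
      _ ≤ (∫⁻ x, ((‖f x‖₊ : ℝ≥0∞) * (g x) ^ (1/r)) ^ r ∂μ) ^ (1/r) *
            (∫⁻ x, ((g x) ^ (1/q)) ^ q ∂μ) ^ (1/q) := this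
      _ = (∫⁻ x, (‖f x‖₊ : ℝ≥0∞) ^ r * g x ∂μ) ^ (1/r) * (∫⁻ x, g x ∂μ) ^ (1/q) := by
          congr 1
          · congr 1
            refine lintegral_congr fun x => ?_
            rw [ENNReal.mul_rpow_of_nonneg _ _ hr0.le, ← ENNReal.rpow_mul,
              one_div, inv_mul_cancel₀ hr0.ne', ENNReal.rpow_one]
          · congr 1
            refine lintegral_congr fun x => ?_
            rw [← ENNReal.rpow_mul, one_div, inv_mul_cancel₀ hq0.ne', ENNReal.rpow_one]
  set A := ∫⁻ x, (‖f x‖₊ : ℝ≥0∞) ^ r * g x ∂μ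
  set W := ∫⁻ x, g x ∂μ
  calc ENNReal.ofReal (|I| ^ r) = ((‖I‖₊ : ℝ≥0∞)) ^ r := h1
    _ ≤ (A ^ (1/r) * W ^ (1/q)) ^ r :=
        ENNReal.rpow_le_rpow (le_trans h2 h3) hr0.le
    _ = A ^ ((1/r) * r) * W ^ ((1/q) * r) := by
        rw [ENNReal.mul_rpow_of_nonneg _ _ hr0.le, ← ENNReal.rpow_mul, ← ENNReal.rpow_mul]
    _ = W ^ (r - 1) * A := by
        rw [one_div, inv_mul_cancel₀ hr0.ne', ENNReal.rpow_one]
        have : (1/q) * r = r - 1 := by rw [hiq]; field_simp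
        rw [this, mul_comm]

/-- Pointwise fiber bound: `|w M̃f|^r ≤ w^{r-1} ∫_{fiber} |f|^r /|∇θ|`. -/
lemma claimA {n : ℕ} (Ω : Set (Fin n → ℝ)) (θ : (Fin n → ℝ) → ℝ)
    (f : (Fin n → ℝ) → ℝ) (hf : Measurable f) (r : ℝ) (hr : 1 < r) (t : ℝ) :
    ENNReal.ofReal (|(wθ Ω θ t).toReal * fibAvg Ω θ f t| ^ r)
      ≤ (wθ Ω θ t) ^ (r - 1) *
        fibInt Ω θ (fun x => (‖f x‖₊ : ℝ≥0∞) ^ r) t := by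
  have hr0 : (0:ℝ) < r := lt_trans one_pos hr
  by_cases h : 0 < wθ Ω θ t ∧ wθ Ω θ t < ⊤
  · set μ := (μH[(n:ℝ)-1]).restrict (Ω ∩ θ ⁻¹' {t}) with hμ
    set g : (Fin n → ℝ) → ℝ≥0∞ := fun x => (ENNReal.ofReal ‖fderiv ℝ θ x‖)⁻¹ with hgdef
    have hg : Measurable g := ((measurable_fderiv ℝ θ).norm.ennreal_ofReal).inv
    have hW : wθ Ω θ t = ∫⁻ x, g x ∂μ := by
      simp only [wθ, fibInt, one_mul, hμ, hgdef]
    have hWne : (wθ Ω θ t).toReal ≠ 0 :=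
      ENNReal.toReal_ne_zero.2 ⟨h.1.ne', h.2.ne⟩
    have havg : (wθ Ω θ t).toReal * fibAvg Ω θ f t
        = ∫ x, f x * (g x).toReal ∂μ := by
      rw [fibAvg, if_pos h, ← mul_assoc, mul_inv_cancel₀ hWne, one_mul]
      refine integral_congr_ae (Filter.Eventually.of_forall fun x => ?_)
      rw [hgdef]
      simp only [ENNReal.toReal_inv, ENNReal.toReal_ofReal (norm_nonneg _)]
    have key := holder_key μ f g hf.aemeasurable hg.aemeasurable r hr
    rw [havg, hW]
    exact key
  · rw [fibAvg, if_neg h]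
    simp [Real.zero_rpow hr0.ne']

theorem stmt14 {n : ℕ} (Ω : Set (Fin n → ℝ)) (hΩ : MeasurableSet Ω)
    (hΩb : Bornology.IsBounded Ω)
    (θ : (Fin n → ℝ) → ℝ) (L : NNReal) (hθ : LipschitzWith L θ)
    (hgrad : ∀ᵐ x ∂(volume.restrict Ω), fderiv ℝ θ x ≠ 0)
    (hcoarea : ∀ G : (Fin n → ℝ) → ℝ≥0∞, Measurable G →
      ∫⁻ x in Ω, G x ∂volume = ∫⁻ t : ℝ, fibInt Ω θ G t)
    (V : Finset ℝ) (hV : V.Nonempty)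
    (hloc : ∀ K : Set ℝ, IsCompact K → Disjoint K (V : Set ℝ) →
      ∃ CK : ℝ, ∀ᵐ t : ℝ, t ∈ K → wθ Ω θ t ≤ ENNReal.ofReal CK)
    (δ₀ Cβ β : ℝ) (hδ₀ : 0 < δ₀) (hCβ : 0 ≤ Cβ) (hβ0 : 0 ≤ β) (hβ1 : β < 1)
    (hblow : ∀ᵐ t : ℝ, Metric.infDist t (V : Set ℝ) < δ₀ →
      wθ Ω θ t ≤ ENNReal.ofReal (Cβ * Metric.infDist t (V : Set ℝ) ^ (-β)))
    (δ : ℝ) (hδ0 : 0 < δ) (hδδ₀ : δ < δ₀)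
    (r : ℝ) (hr : 1 < r) (hrβ : β * (r - 1) < 1) :
    (∀ f : (Fin n → ℝ) → ℝ, Measurable f →
      ∫⁻ t in {t : ℝ | Metric.infDist t (V : Set ℝ) < δ},
          ENNReal.ofReal (|(wθ Ω θ t).toReal * fibAvg Ω θ f t| ^ r)
        ≤ ENNReal.ofReal Cβ ^ (r - 1) *
            ∫⁻ x in Ω ∩ θ ⁻¹' {t : ℝ | Metric.infDist t (V : Set ℝ) < δ},
              (‖f x‖₊ : ℝ≥0∞) ^ r *
                (ENNReal.ofReal (Metric.infDist (θ x) (V : Set ℝ)))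
                  ^ (-(β * (r - 1))) ∂volume) ∧
    (∃ Cδ : ℝ≥0∞, Cδ ≠ ⊤ ∧ ∀ f : (Fin n → ℝ) → ℝ, Measurable f →
      ∫⁻ t in {t : ℝ | Metric.infDist t (V : Set ℝ) < δ}ᶜ,
          ENNReal.ofReal (|(wθ Ω θ t).toReal * fibAvg Ω θ f t| ^ r)
        ≤ Cδ * ∫⁻ x in Ω, (‖f x‖₊ : ℝ≥0∞) ^ r ∂volume) := by
  have hr1 : (0:ℝ) ≤ r - 1 := by linarith
  have hθc : Continuous θ := hθ.continuous
  have hθm : Measurable θ := hθc.measurable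
  set U : Set ℝ := {t : ℝ | Metric.infDist t (V : Set ℝ) < δ} with hUdef
  have hUopen : IsOpen U := by
    have : U = (fun t => Metric.infDist t (V : Set ℝ)) ⁻¹' Set.Iio δ := rfl
    rw [this]; exact (continuous_infDist_pt _).isOpen_preimage _ isOpen_Iio
  have hUm : MeasurableSet U := hUopen.measurableSet
  have hVclosed : IsClosed (V : Set ℝ) := V.finite_toSet.isClosed
  have hVae : ∀ᵐ t : ℝ, t ∉ (V : Set ℝ) :=
    measure_eq_zero_iff_ae_notMem.1 (V.finite_toSet.measure_zero _)
  constructor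
  · -- Part (i)
    intro f hf
    set γ := β * (r - 1) with hγdef
    set D : ℝ → ℝ≥0∞ := fun s => ENNReal.ofReal (Metric.infDist s (V : Set ℝ)) with hD
    set G₁ : (Fin n → ℝ) → ℝ≥0∞ := (θ ⁻¹' U).indicator
      (fun x => (‖f x‖₊ : ℝ≥0∞) ^ r * (D (θ x)) ^ (-γ)) with hG₁
    have hG₁m : Measurable G₁ := by
      refine Measurable.indicator ?_ (hθm hUm)
      exact ((hf.nnnorm.coe_nnreal_ennreal).pow_const r).mul
        ((((continuous_infDist_pt _).comp hθc).measurable.ennreal_ofReal).pow_const _)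
    have hbound : ∀ᵐ t : ℝ,
        U.indicator (fun t => ENNReal.ofReal (|(wθ Ω θ t).toReal * fibAvg Ω θ f t| ^ r)) t
          ≤ ENNReal.ofReal Cβ ^ (r - 1) * fibInt Ω θ G₁ t := by
      filter_upwards [hblow, hVae] with t hb htV
      by_cases htU : t ∈ U
      · rw [Set.indicator_of_mem htU]
        set d := Metric.infDist t (V : Set ℝ) with hd
        have hd0 : 0 < d := by
          rw [hd]; exact (hVclosed.notMem_iff_infDist_pos (Finset.coe_nonempty.mpr hV)).1 htV
        have hWb : wθ Ω θ t ≤ ENNReal.ofReal Cβ * (ENNReal.ofReal d) ^ (-β) := by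
          have := hb (lt_trans htU hδδ₀)
          rwa [ENNReal.ofReal_mul hCβ, ← ENNReal.ofReal_rpow_of_pos hd0] at this
        have hWr : (wθ Ω θ t) ^ (r - 1)
            ≤ ENNReal.ofReal Cβ ^ (r - 1) * (ENNReal.ofReal d) ^ (-γ) := by
          calc (wθ Ω θ t) ^ (r - 1)
              ≤ (ENNReal.ofReal Cβ * (ENNReal.ofReal d) ^ (-β)) ^ (r - 1) :=
                ENNReal.rpow_le_rpow hWb hr1
            _ = ENNReal.ofReal Cβ ^ (r - 1) * (ENNReal.ofReal d) ^ (-γ) := by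
                rw [ENNReal.mul_rpow_of_nonneg _ _ hr1, ← ENNReal.rpow_mul, hγdef, neg_mul]
        have hfib : fibInt Ω θ G₁ t
            = (ENNReal.ofReal d) ^ (-γ) * fibInt Ω θ (fun x => (‖f x‖₊ : ℝ≥0∞) ^ r) t := by
          rw [fibInt, fibInt, ← lintegral_const_mul' _ _ (by
            rw [ENNReal.ofReal_rpow_of_pos hd0]; exact ENNReal.ofReal_ne_top)]
          refine setLIntegral_congr_fun (hΩ.inter (hθm (measurableSet_singleton t)))
            (fun x hx => ?_)
          have hxt : θ x = t := hx.2
          rw [hG₁, Set.indicator_of_mem (by simp [Set.mem_preimage, hxt, htU])]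
          simp only [hD, hxt, hd]
          ring
        calc ENNReal.ofReal (|(wθ Ω θ t).toReal * fibAvg Ω θ f t| ^ r)
            ≤ (wθ Ω θ t) ^ (r - 1) * fibInt Ω θ (fun x => (‖f x‖₊ : ℝ≥0∞) ^ r) t :=
              claimA Ω θ f hf r hr t
          _ ≤ (ENNReal.ofReal Cβ ^ (r - 1) * (ENNReal.ofReal d) ^ (-γ)) *
              fibInt Ω θ (fun x => (‖f x‖₊ : ℝ≥0∞) ^ r) t := mul_le_mul_left hWr _
          _ = ENNReal.ofReal Cβ ^ (r - 1) * fibInt Ω θ G₁ t := by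
              rw [hfib]; ring
      · rw [Set.indicator_of_notMem htU]; exact zero_le
    have hCne : ENNReal.ofReal Cβ ^ (r - 1) ≠ ⊤ :=
      ENNReal.rpow_ne_top_of_nonneg hr1 ENNReal.ofReal_ne_top
    calc ∫⁻ t in U, ENNReal.ofReal (|(wθ Ω θ t).toReal * fibAvg Ω θ f t| ^ r)
        = ∫⁻ t, U.indicator
            (fun t => ENNReal.ofReal (|(wθ Ω θ t).toReal * fibAvg Ω θ f t| ^ r)) t :=
          (lintegral_indicator hUm _).symm
      _ ≤ ∫⁻ t, ENNReal.ofReal Cβ ^ (r - 1) * fibInt Ω θ G₁ t := lintegral_mono_ae hbound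
      _ = ENNReal.ofReal Cβ ^ (r - 1) * ∫⁻ t, fibInt Ω θ G₁ t :=
          lintegral_const_mul' _ _ hCne
      _ = ENNReal.ofReal Cβ ^ (r - 1) * ∫⁻ x in Ω, G₁ x ∂volume := by
          rw [hcoarea G₁ hG₁m]
      _ = ENNReal.ofReal Cβ ^ (r - 1) *
            ∫⁻ x in Ω ∩ θ ⁻¹' U,
              (‖f x‖₊ : ℝ≥0∞) ^ r * (D (θ x)) ^ (-γ) ∂volume := by
          congr 1
          rw [hG₁, lintegral_indicator (hθm hUm), Measure.restrict_restrict (hθm hUm),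
            Set.inter_comm]
  · -- Part (ii)
    set T : Set ℝ := closure (θ '' Ω) with hT
    have hTc : IsCompact T :=
      Metric.isCompact_of_isClosed_isBounded isClosed_closure
        (hθ.isBounded_image hΩb).closure
    have hKc : IsCompact (T ∩ Uᶜ) := hTc.inter_right hUopen.isClosed_compl
    have hKd : Disjoint (T ∩ Uᶜ) (V : Set ℝ) := by
      refine Set.disjoint_left.2 fun t ht htV => ?_
      exact ht.2 (by simpa [hUdef, Metric.infDist_zero_of_mem htV] using hδ0)
    obtain ⟨CK, hCK⟩ := hloc _ hKc hKd
    refine ⟨ENNReal.ofReal CK ^ (r - 1),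
      ENNReal.rpow_ne_top_of_nonneg hr1 ENNReal.ofReal_ne_top, fun f hf => ?_⟩
    have hbound : ∀ᵐ t : ℝ,
        Uᶜ.indicator (fun t => ENNReal.ofReal (|(wθ Ω θ t).toReal * fibAvg Ω θ f t| ^ r)) t
          ≤ ENNReal.ofReal CK ^ (r - 1) *
              fibInt Ω θ (fun x => (‖f x‖₊ : ℝ≥0∞) ^ r) t := by
      filter_upwards [hCK] with t ht
      by_cases htU : t ∈ Uᶜ
      · rw [Set.indicator_of_mem htU]
        refine le_trans (claimA Ω θ f hf r hr t) (mul_le_mul_left ?_ _)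
        by_cases htT : t ∈ T
        · exact ENNReal.rpow_le_rpow (ht ⟨htT, htU⟩) hr1
        · have hempty : Ω ∩ θ ⁻¹' {t} = ∅ := by
            ext x
            simp only [Set.mem_inter_iff, Set.mem_preimage, Set.mem_singleton_iff,
              Set.mem_empty_iff_false, iff_false, not_and]
            intro hxΩ hxt
            exact htT (hxt ▸ subset_closure (Set.mem_image_of_mem θ hxΩ))
          have hW0 : wθ Ω θ t = 0 := by
            rw [wθ, fibInt, hempty, Measure.restrict_empty, lintegral_zero_measure]
          rw [hW0, ENNReal.zero_rpow_of_pos (by linarith)]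
          exact zero_le
      · rw [Set.indicator_of_notMem htU]; exact zero_le
    calc ∫⁻ t in Uᶜ, ENNReal.ofReal (|(wθ Ω θ t).toReal * fibAvg Ω θ f t| ^ r)
        = ∫⁻ t, Uᶜ.indicator
            (fun t => ENNReal.ofReal (|(wθ Ω θ t).toReal * fibAvg Ω θ f t| ^ r)) t :=
          (lintegral_indicator hUm.compl _).symm
      _ ≤ ∫⁻ t, ENNReal.ofReal CK ^ (r - 1) *
            fibInt Ω θ (fun x => (‖f x‖₊ : ℝ≥0∞) ^ r) t := lintegral_mono_ae hbound
      _ = ENNReal.ofReal CK ^ (r - 1) *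
            ∫⁻ t, fibInt Ω θ (fun x => (‖f x‖₊ : ℝ≥0∞) ^ r) t :=
          lintegral_const_mul' _ _
            (ENNReal.rpow_ne_top_of_nonneg hr1 ENNReal.ofReal_ne_top)
      _ = ENNReal.ofReal CK ^ (r - 1) * ∫⁻ x in Ω, (‖f x‖₊ : ℝ≥0∞) ^ r ∂volume := by
          rw [hcoarea _ ((hf.nnnorm.coe_nnreal_ennreal).pow_const r)]
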